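/- Let Z : E → F be a linear map between finite-dimensional real normed vector spaces and S ⊆ E a subset. Then S satisfies the support property (i.e., there exist norms on E and F such that ‖Z(x)‖ ≥ ‖x‖ for all x ∈ S) if and only if there exists a quadratic form Q on E such that Q is negative definite on Ker Z and Q(x) ≥ 0 for all x ∈ S. -/

import Mathlib

open scoped RealInnerProductSpace NNReal

private lemma seminorm_sum_le {V : Type*} [AddCommGroup V] [Module ℝ V]
    (p : Seminorm ℝ V) {ι : Type*} (s : Finset ι) (f : ι → V) :
    p (∑ i ∈ s, f i) ≤ ∑ i ∈ s, p (f i) := by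
  classical
  induction s using Finset.cons_induction with
  | empty => simp
  | cons a s ha ih =>
    rw [Finset.sum_cons, Finset.sum_cons]
    exact le_trans (map_add_le_add p _ _) (add_le_add le_rfl ih)

private lemma coord_le_norm {n : ℕ} (x : EuclideanSpace ℝ (Fin n)) (i : Fin n) :
    |x i| ≤ ‖x‖ := by
  rw [EuclideanSpace.norm_eq]
  have h1 : |x i| = Real.sqrt (‖x i‖ ^ 2) := by
    rw [Real.sqrt_sq_eq_abs]; simp [Real.norm_eq_abs, abs_abs]
  rw [h1]
  apply Real.sqrt_le_sqrt
  exact Finset.single_le_sum (fun j _ => sq_nonneg ‖x j‖) (Finset.mem_univ i)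

/-- Every seminorm on a Euclidean space is bounded above by a multiple of the norm. -/
private lemma seminorm_upper {n : ℕ} (p : Seminorm ℝ (EuclideanSpace ℝ (Fin n))) :
    ∃ M : ℝ, 0 ≤ M ∧ ∀ x, p x ≤ M * ‖x‖ := by
  classical
  set b := EuclideanSpace.basisFun (Fin n) ℝ with hb
  refine ⟨∑ i, p (b i), Finset.sum_nonneg fun i _ => apply_nonneg p _, fun x => ?_⟩
  have hx : x = ∑ i, x i • b i := by
    have := b.sum_repr x
    simpa [hb, EuclideanSpace.basisFun_repr] using this.symm
  calc p x = p (∑ i, x i • b i) := by rw [← hx]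
    _ ≤ ∑ i, p (x i • b i) := seminorm_sum_le p _ _
    _ = ∑ i, |x i| * p (b i) := by
        refine Finset.sum_congr rfl fun i _ => ?_
        rw [map_smul_eq_mul]; simp [Real.norm_eq_abs]
    _ ≤ ∑ i, ‖x‖ * p (b i) :=
        Finset.sum_le_sum fun i _ =>
          mul_le_mul_of_nonneg_right (coord_le_norm x i) (apply_nonneg p _)
    _ = (∑ i, p (b i)) * ‖x‖ := by rw [← Finset.mul_sum, mul_comm]

private lemma seminorm_continuous {n : ℕ} (p : Seminorm ℝ (EuclideanSpace ℝ (Fin n))) :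
    Continuous p := by
  obtain ⟨M, hM0, hM⟩ := seminorm_upper p
  refine (LipschitzWith.of_dist_le_mul (K := M.toNNReal) fun x y => ?_).continuous
  rw [Real.dist_eq, dist_eq_norm]
  calc |p x - p y| ≤ p (x - y) := abs_sub_map_le_sub p x y
    _ ≤ M * ‖x - y‖ := hM _
    _ = (M.toNNReal : ℝ) * ‖x - y‖ := by rw [Real.coe_toNNReal M hM0]

/-- A seminorm on a Euclidean space which vanishes only at zero is bounded below
by a positive multiple of the norm. -/
private lemma seminorm_lower {n : ℕ} (p : Seminorm ℝ (EuclideanSpace ℝ (Fin n)))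
    (hp : ∀ x, p x = 0 → x = 0) : ∃ c : ℝ, 0 < c ∧ ∀ x, c * ‖x‖ ≤ p x := by
  by_cases htriv : ∀ x : EuclideanSpace ℝ (Fin n), x = 0
  · refine ⟨1, one_pos, fun x => ?_⟩
    rw [htriv x]; simp
  · push_neg at htriv
    obtain ⟨x₀, hx₀⟩ := htriv
    have : Nontrivial (EuclideanSpace ℝ (Fin n)) := ⟨x₀, 0, hx₀⟩
    have hne : (Metric.sphere (0 : EuclideanSpace ℝ (Fin n)) 1).Nonempty :=
      NormedSpace.sphere_nonempty.mpr zero_le_one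
    obtain ⟨z, hz, hzmin⟩ :=
      (isCompact_sphere (0 : EuclideanSpace ℝ (Fin n)) 1).exists_isMinOn hne
        (seminorm_continuous p).continuousOn
    have hznorm : ‖z‖ = 1 := by simpa using hz
    have hzne : z ≠ 0 := by intro h; rw [h] at hznorm; simp at hznorm
    have hcz : 0 < p z := by
      rcases (apply_nonneg p z).lt_or_eq with h | h
      · exact h
      · exact absurd (hp z h.symm) hzne
    refine ⟨p z, hcz, fun x => ?_⟩
    rcases eq_or_ne x 0 with rfl | hx
    · simp
    · have hnx : (0 : ℝ) < ‖x‖ := norm_pos_iff.mpr hx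
      have hu : ‖x‖⁻¹ • x ∈ Metric.sphere (0 : EuclideanSpace ℝ (Fin n)) 1 := by
        simp [norm_smul, abs_of_pos (inv_pos.mpr hnx), inv_mul_cancel₀ hnx.ne']
      have this : p z ≤ p (‖x‖⁻¹ • x) := isMinOn_iff.mp hzmin _ hu
      have hpu : p (‖x‖⁻¹ • x) = ‖x‖⁻¹ * p x := by
        rw [map_smul_eq_mul]; simp [Real.norm_eq_abs, abs_of_pos (inv_pos.mpr hnx)]
      rw [hpu] at this
      calc p z * ‖x‖ ≤ (‖x‖⁻¹ * p x) * ‖x‖ :=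
            mul_le_mul_of_nonneg_right this hnx.le
        _ = p x := by field_simp

/-- Key compactness lemma: if `g` is continuous, 2-homogeneous, and negative on the
nonzero kernel of `h`, then `‖h x‖` dominates `‖x‖` on `{g ≥ 0}`. -/
private lemma key_lemma {n m : ℕ} (h : EuclideanSpace ℝ (Fin n) →ₗ[ℝ] EuclideanSpace ℝ (Fin m))
    (g : EuclideanSpace ℝ (Fin n) → ℝ) (hgc : Continuous g)
    (hhom : ∀ (t : ℝ) x, g (t • x) = t ^ 2 * g x)
    (hneg : ∀ x, h x = 0 → x ≠ 0 → g x < 0) :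
    ∃ c : ℝ, 0 < c ∧ ∀ x, 0 ≤ g x → c * ‖x‖ ≤ ‖h x‖ := by
  have hhc : Continuous h := h.continuous_of_finiteDimensional
  set K : Set (EuclideanSpace ℝ (Fin n)) :=
    Metric.sphere 0 1 ∩ {x | 0 ≤ g x} with hK
  have hKc : IsCompact K :=
    (isCompact_sphere 0 1).inter_right (isClosed_le continuous_const hgc)
  have hmem : ∀ x : EuclideanSpace ℝ (Fin n), x ≠ 0 → 0 ≤ g x → ‖x‖⁻¹ • x ∈ K := by
    intro x hx hgx
    have hnx : (0 : ℝ) < ‖x‖ := norm_pos_iff.mpr hx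
    constructor
    · simp [norm_smul, abs_of_pos (inv_pos.mpr hnx), inv_mul_cancel₀ hnx.ne']
    · show 0 ≤ g (‖x‖⁻¹ • x)
      rw [hhom]
      positivity
  by_cases hKne : K.Nonempty
  · obtain ⟨z, hzK, hzmin⟩ := hKc.exists_isMinOn hKne (hhc.norm.continuousOn)
    have hznorm : ‖z‖ = 1 := by simpa using hzK.1
    have hzne : z ≠ 0 := by intro hzz; rw [hzz] at hznorm; simp at hznorm
    have hc : 0 < ‖h z‖ := by
      rw [norm_pos_iff]
      intro hhz
      exact absurd hzK.2 (not_le.mpr (hneg z hhz hzne))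
    refine ⟨‖h z‖, hc, fun x hgx => ?_⟩
    rcases eq_or_ne x 0 with rfl | hx
    · simp
    · have hnx : (0 : ℝ) < ‖x‖ := norm_pos_iff.mpr hx
      have this : ‖h z‖ ≤ ‖h (‖x‖⁻¹ • x)‖ := isMinOn_iff.mp hzmin _ (hmem x hx hgx)
      have heq : ‖h (‖x‖⁻¹ • x)‖ = ‖x‖⁻¹ * ‖h x‖ := by
        rw [map_smul, norm_smul, Real.norm_eq_abs, abs_of_pos (inv_pos.mpr hnx)]
      rw [heq] at this
      calc ‖h z‖ * ‖x‖ ≤ (‖x‖⁻¹ * ‖h x‖) * ‖x‖ :=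
            mul_le_mul_of_nonneg_right this hnx.le
        _ = ‖h x‖ := by field_simp
  · refine ⟨1, one_pos, fun x hgx => ?_⟩
    rcases eq_or_ne x 0 with rfl | hx
    · simp
    · exact absurd ⟨_, hmem x hx hgx⟩ hKne

theorem stmt8 {E F : Type*} [AddCommGroup E] [Module ℝ E] [FiniteDimensional ℝ E]
    [AddCommGroup F] [Module ℝ F] [FiniteDimensional ℝ F]
    (Z : E →ₗ[ℝ] F) (S : Set E) :
    (∃ (nE : Seminorm ℝ E) (nF : Seminorm ℝ F),
        (∀ x : E, nE x = 0 → x = 0) ∧ (∀ y : F, nF y = 0 → y = 0) ∧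
        ∀ x ∈ S, nE x ≤ nF (Z x)) ↔
    ∃ Q : QuadraticForm ℝ E,
        (∀ x : E, Z x = 0 → x ≠ 0 → Q x < 0) ∧ ∀ x ∈ S, 0 ≤ Q x := by
  classical
  set nn := Module.finrank ℝ E
  set mm := Module.finrank ℝ F
  set e : E ≃ₗ[ℝ] EuclideanSpace ℝ (Fin nn) :=
    (Module.finBasis ℝ E).equivFun.trans
      (EuclideanSpace.equiv (Fin nn) ℝ).symm.toLinearEquiv with he
  set f : F ≃ₗ[ℝ] EuclideanSpace ℝ (Fin mm) :=
    (Module.finBasis ℝ F).equivFun.trans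
      (EuclideanSpace.equiv (Fin mm) ℝ).symm.toLinearEquiv with hf
  constructor
  · rintro ⟨nE, nF, hE, hF, hS⟩
    -- transport seminorms to the Euclidean models
    set p : Seminorm ℝ (EuclideanSpace ℝ (Fin nn)) := nE.comp e.symm.toLinearMap with hp
    set q : Seminorm ℝ (EuclideanSpace ℝ (Fin mm)) := nF.comp f.symm.toLinearMap with hq
    obtain ⟨c, hc, hcle⟩ := seminorm_lower p (by
      intro x hx
      have : nE (e.symm x) = 0 := hx
      have := hE _ this
      have : e.symm x = 0 := this
      simpa using congrArg e this)
    obtain ⟨M, hM0, hMle⟩ := seminorm_upper q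
    set r : ℝ := M / c with hr
    have hr0 : 0 ≤ r := div_nonneg hM0 hc.le
    -- the quadratic form  Q x = r² ⟪f(Zx), f(Zx)⟫ − ⟪e x, e x⟫
    set B : LinearMap.BilinForm ℝ E := LinearMap.mk₂ ℝ
      (fun x y => r ^ 2 * ⟪f (Z x), f (Z y)⟫ - ⟪e x, e y⟫)
      (by intro x x' y; simp only [map_add, inner_add_left]; ring)
      (by intro a x y; simp only [map_smul, real_inner_smul_left, smul_eq_mul]; ring)
      (by intro x y y'; simp only [map_add, inner_add_right]; ring)
      (by intro a x y; simp only [map_smul, real_inner_smul_right, smul_eq_mul]; ring) with hB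
    refine ⟨B.toQuadraticMap, ?_, ?_⟩
    · intro x hZx hx
      have hBx : B.toQuadraticMap x = r ^ 2 * ⟪f (Z x), f (Z x)⟫ - ⟪e x, e x⟫ := by
        rw [LinearMap.BilinMap.toQuadraticMap_apply]; rfl
      rw [hBx, hZx]
      have hex : e x ≠ 0 := by
        intro hh; exact hx (by simpa using congrArg e.symm hh)
      have : 0 < ⟪e x, e x⟫ := by
        rw [real_inner_self_eq_norm_sq]
        have : 0 < ‖e x‖ := norm_pos_iff.mpr hex
        positivity
      simp only [map_zero, inner_zero_left, mul_zero, zero_sub, neg_neg]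
      linarith
    · intro x hxS
      have hBx : B.toQuadraticMap x = r ^ 2 * ⟪f (Z x), f (Z x)⟫ - ⟪e x, e x⟫ := by
        rw [LinearMap.BilinMap.toQuadraticMap_apply]; rfl
      rw [hBx, real_inner_self_eq_norm_sq, real_inner_self_eq_norm_sq]
      have h1 : c * ‖e x‖ ≤ nE x := by
        have := hcle (e x)
        simpa [hp, Seminorm.comp_apply] using this
      have h2 : nF (Z x) ≤ M * ‖f (Z x)‖ := by
        have := hMle (f (Z x))
        simpa [hq, Seminorm.comp_apply] using this
      have h3 : ‖e x‖ ≤ r * ‖f (Z x)‖ := by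
        rw [hr, div_mul_eq_mul_div, le_div_iff₀ hc, mul_comm ‖e x‖ c]
        exact h1.trans ((hS x hxS).trans h2)
      have h4 : ‖e x‖ ^ 2 ≤ r ^ 2 * ‖f (Z x)‖ ^ 2 := by
        calc ‖e x‖ ^ 2 ≤ (r * ‖f (Z x)‖) ^ 2 :=
              pow_le_pow_left₀ (norm_nonneg _) h3 2
          _ = r ^ 2 * ‖f (Z x)‖ ^ 2 := by ring
      linarith
  · rintro ⟨Q, hker, hS⟩
    -- transport Q and Z to the Euclidean models
    set B : LinearMap.BilinForm ℝ E := QuadraticMap.associatedHom ℝ Q with hBdef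
    set B' : LinearMap.BilinForm ℝ (EuclideanSpace ℝ (Fin nn)) :=
      B.compl₁₂ e.symm.toLinearMap e.symm.toLinearMap with hB'
    set g : EuclideanSpace ℝ (Fin nn) → ℝ := fun x => Q (e.symm x) with hg
    have hgB : ∀ x, g x = B' x x := by
      intro x
      simp only [hg, hB', LinearMap.compl₁₂_apply, hBdef]
      exact (QuadraticMap.associated_eq_self_apply ℝ Q (e.symm x)).symm
    have hgc : Continuous g := by
      have h1 : Continuous fun x : EuclideanSpace ℝ (Fin nn) =>
          (LinearMap.toContinuousLinearMap (B' x) : EuclideanSpace ℝ (Fin nn) →L[ℝ] ℝ) := by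
        exact LinearMap.continuous_of_finiteDimensional
          ((LinearMap.toContinuousLinearMap : _ ≃ₗ[ℝ] _).toLinearMap.comp B')
      have h2 : Continuous fun x : EuclideanSpace ℝ (Fin nn) =>
          (LinearMap.toContinuousLinearMap (B' x)) x := h1.clm_apply continuous_id
      have h3 : g = fun x => (LinearMap.toContinuousLinearMap (B' x)) x := by
        funext x; rw [hgB]; rfl
      rw [h3]; exact h2
    have hhom : ∀ (t : ℝ) x, g (t • x) = t ^ 2 * g x := by
      intro t x
      simp only [hg, map_smul, QuadraticMap.map_smul, smul_eq_mul]
      ring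
    set h : EuclideanSpace ℝ (Fin nn) →ₗ[ℝ] EuclideanSpace ℝ (Fin mm) :=
      (f.toLinearMap.comp Z).comp e.symm.toLinearMap with hh
    have hneg : ∀ x, h x = 0 → x ≠ 0 → g x < 0 := by
      intro x hhx hx
      have hZ : Z (e.symm x) = 0 := by
        have : f (Z (e.symm x)) = 0 := hhx
        simpa using congrArg f.symm this
      have hxe : e.symm x ≠ 0 := by
        intro hh0; exact hx (by simpa using congrArg e hh0)
      exact hker _ hZ hxe
    obtain ⟨c, hc, hkey⟩ := key_lemma h g hgc hhom hneg
    refine ⟨(normSeminorm ℝ (EuclideanSpace ℝ (Fin nn))).comp e.toLinearMap,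
      (Real.toNNReal c⁻¹) • ((normSeminorm ℝ (EuclideanSpace ℝ (Fin mm))).comp f.toLinearMap),
      ?_, ?_, ?_⟩
    · intro x hx
      have : ‖e x‖ = 0 := hx
      have : e x = 0 := norm_eq_zero.mp this
      simpa using congrArg e.symm this
    · intro y hy
      have hcoe : ((Real.toNNReal c⁻¹ : ℝ≥0) : ℝ) = c⁻¹ :=
        Real.coe_toNNReal _ (inv_pos.mpr hc).le
      have h0 : c⁻¹ * ‖f y‖ = 0 := by
        have h0' := hy
        simp only [Seminorm.smul_apply, Seminorm.comp_apply, coe_normSeminorm,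
          NNReal.smul_def, hcoe, smul_eq_mul] at h0'
        exact h0'
      have h1 : ‖f y‖ = 0 := by
        rcases mul_eq_zero.mp h0 with h | h
        · exact absurd h (inv_pos.mpr hc).ne'
        · exact h
      have : f y = 0 := norm_eq_zero.mp h1
      simpa using congrArg f.symm this
    · intro x hxS
      have hgx : 0 ≤ g (e x) := by
        simp only [hg]
        simpa using hS x hxS
      have := hkey (e x) hgx
      have hhe : h (e x) = f (Z x) := by simp [hh]
      rw [hhe] at this
      have hcoe : ((Real.toNNReal c⁻¹ : ℝ≥0) : ℝ) = c⁻¹ :=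
        Real.coe_toNNReal _ (inv_pos.mpr hc).le
      have hgoal : ‖e x‖ ≤ c⁻¹ * ‖f (Z x)‖ := by
        rw [le_inv_mul_iff₀ hc]
        exact this
      simpa [Seminorm.comp_apply, Seminorm.smul_apply, NNReal.smul_def, hcoe,
        coe_normSeminorm] using hgoal
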